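/- arXiv:1806.05756 — 2 statements merged into one kernel-verified Lean document; each statement's English description precedes it below -/
import Mathlib

section
/- Let P_θ and P_{θ0} be one-dimensional logistic regression distributions on (x,y) ∈ {−1,1}² with x uniform and P_θ(y|x) = 1/(1 + e^{−yθx}). Then the total variation distance is ||P_θ − P_{θ0}||_TV = |e^θ − e^{θ0}| / (1 + e^θ + e^{θ0} + e^{θ+θ0}), and for θ = θ0 + Δ with θ0 > 0, ||P_θ − P_{θ0}||_TV ≤ e^{−θ0}|1 − e^{−Δ}|. -/
def sgn (b : Bool) : ℝ := if b then 1 else -1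

noncomputable def pLogistic (θ : ℝ) (xy : Bool × Bool) : ℝ :=
  (1 / 2) * (1 / (1 + Real.exp (-(sgn xy.2) * θ * sgn xy.1)))

noncomputable def tvFin (p q : Bool × Bool → ℝ) : ℝ :=
  (1 / 2) * ∑ z : Bool × Bool, |p z - q z|

lemma key (θ θ0 : ℝ) : tvFin (pLogistic θ) (pLogistic θ0) =
    |Real.exp θ - Real.exp θ0| /
      (1 + Real.exp θ + Real.exp θ0 + Real.exp (θ + θ0)) := by
  have ha := Real.exp_pos θ
  have hb := Real.exp_pos θ0
  have h1a : (0:ℝ) < 1 + Real.exp θ := by linarith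
  have h1b : (0:ℝ) < 1 + Real.exp θ0 := by linarith
  have hinv : ∀ t : ℝ, (1 + Real.exp (-t))⁻¹ = Real.exp t / (1 + Real.exp t) := by
    intro t
    rw [Real.exp_neg]
    have h := Real.exp_pos t
    field_simp
    ring
  have hD : (1 + Real.exp θ) * (1 + Real.exp θ0)
      = 1 + Real.exp θ + Real.exp θ0 + Real.exp (θ + θ0) := by
    rw [Real.exp_add]; ring
  have hd1 : Real.exp θ / (1 + Real.exp θ) - Real.exp θ0 / (1 + Real.exp θ0)
      = (Real.exp θ - Real.exp θ0) / ((1 + Real.exp θ) * (1 + Real.exp θ0)) := by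
    field_simp
    ring
  have hd2 : (1 + Real.exp θ)⁻¹ - (1 + Real.exp θ0)⁻¹
      = -((Real.exp θ - Real.exp θ0) / ((1 + Real.exp θ) * (1 + Real.exp θ0))) := by
    field_simp
    ring
  simp only [tvFin, pLogistic, sgn, Fintype.sum_prod_type, Fintype.sum_bool]
  norm_num
  rw [hinv θ, hinv θ0]
  rw [← mul_sub, ← mul_sub, abs_mul, abs_mul, hd1, hd2]
  rw [abs_neg]
  have hq : |(Real.exp θ - Real.exp θ0) / ((1 + Real.exp θ) * (1 + Real.exp θ0))|
      = |Real.exp θ - Real.exp θ0| / (1 + Real.exp θ + Real.exp θ0 + Real.exp (θ + θ0)) := by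
    rw [abs_div, abs_of_pos (by positivity : (0:ℝ) < (1 + Real.exp θ) * (1 + Real.exp θ0)), hD]
  rw [hq]
  norm_num
  ring

/-- The total variation distance between one-dimensional logistic regression distributions:
`‖P_θ - P_{θ₀}‖_TV = |e^θ - e^{θ₀}| / (1 + e^θ + e^{θ₀} + e^{θ+θ₀})`, and for
`θ = θ₀ + Δ` with `θ₀ > 0`, `‖P_θ - P_{θ₀}‖_TV ≤ e^{-θ₀} |1 - e^{-Δ}|`. -/
theorem statement10 (θ0 Δ : ℝ) (hθ0 : 0 < θ0) :
    (∀ θ : ℝ, tvFin (pLogistic θ) (pLogistic θ0) =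
        |Real.exp θ - Real.exp θ0| /
          (1 + Real.exp θ + Real.exp θ0 + Real.exp (θ + θ0))) ∧
      tvFin (pLogistic (θ0 + Δ)) (pLogistic θ0) ≤
        Real.exp (-θ0) * |1 - Real.exp (-Δ)| := by
  refine ⟨fun θ => key θ θ0, ?_⟩
  rw [key]
  have hnum : |Real.exp (θ0 + Δ) - Real.exp θ0| = Real.exp (θ0 + Δ) * |1 - Real.exp (-Δ)| := by
    have : Real.exp (θ0 + Δ) - Real.exp θ0 = Real.exp (θ0 + Δ) * (1 - Real.exp (-Δ)) := by
      rw [mul_sub, mul_one, ← Real.exp_add]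
      ring_nf
    rw [this, abs_mul, abs_of_pos (Real.exp_pos _)]
  rw [hnum]
  have hDpos : (0:ℝ) < 1 + Real.exp (θ0 + Δ) + Real.exp θ0 + Real.exp (θ0 + Δ + θ0) := by
    positivity
  rw [div_le_iff₀ hDpos]
  have hE : Real.exp (-θ0) * Real.exp (θ0 + Δ + θ0) = Real.exp (θ0 + Δ) := by
    rw [← Real.exp_add]; ring_nf
  have h1 : Real.exp (θ0 + Δ) * |1 - Real.exp (-Δ)|
      = Real.exp (-θ0) * |1 - Real.exp (-Δ)| * Real.exp (θ0 + Δ + θ0) := by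
    rw [mul_right_comm, hE]
  rw [h1]
  have habs : (0:ℝ) ≤ Real.exp (-θ0) * |1 - Real.exp (-Δ)| :=
    mul_nonneg (Real.exp_pos _).le (abs_nonneg _)
  nlinarith [Real.exp_pos (θ0 + Δ), Real.exp_pos θ0]
end

section
/- Let {P_θ} be a one-parameter exponential family with density p_θ(x) = exp(θT(x) − A(θ)) with respect to a base measure μ. Then the L¹-information J_θ := E_θ[|T(X) − A'(θ)|] satisfies: the total variation distance obeys 2||P_{θ+h} − P_θ||_TV = |h|·J_θ + o(|h|) as h → 0, where A'(θ) = E_θ[T(X)]. -/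
open MeasureTheory Asymptotics
open Filter Set

/-- Total variation distance between two measures: `sup_A |P(A) - Q(A)|`. -/
noncomputable def tvDist {X : Type*} [MeasurableSpace X] (P Q : Measure X) : ℝ :=
  ⨆ s : {s : Set X // MeasurableSet s}, |(P s.1).toReal - (Q s.1).toReal|

/-- Log-partition function `A(θ) = log ∫ e^{θ T(x)} dμ(x)` of a one-parameter
exponential family. -/
noncomputable def logPart {X : Type*} [MeasurableSpace X]
    (μ : Measure X) (T : X → ℝ) (θ : ℝ) : ℝ :=
  Real.log (∫ x, Real.exp (θ * T x) ∂μ)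

/-- The exponential family measure `P_θ` with density `exp(θ T(x) - A(θ))` w.r.t. `μ`. -/
noncomputable def expFam {X : Type*} [MeasurableSpace X]
    (μ : Measure X) (T : X → ℝ) (θ : ℝ) : Measure X :=
  μ.withDensity fun x => ENNReal.ofReal (Real.exp (θ * T x - logPart μ T θ))

lemma exp_mul_le_add {a b c : ℝ} (s : ℝ) (hac : a ≤ c) (hcb : c ≤ b) :
    Real.exp (c * s) ≤ Real.exp (a * s) + Real.exp (b * s) := by
  rcases le_or_gt 0 s with hs | hs
  · have : Real.exp (c * s) ≤ Real.exp (b * s) :=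
      Real.exp_le_exp.mpr (mul_le_mul_of_nonneg_right hcb hs)
    linarith [Real.exp_pos (a * s)]
  · have : Real.exp (c * s) ≤ Real.exp (a * s) :=
      Real.exp_le_exp.mpr (by nlinarith)
    linarith [Real.exp_pos (b * s)]

lemma abs_mul_exp_le (c s : ℝ) {δ : ℝ} (hδ : 0 < δ) :
    |s| * Real.exp (c * s) ≤ (Real.exp ((c + δ) * s) + Real.exp ((c - δ) * s)) / δ := by
  have h1 : δ * |s| ≤ Real.exp (δ * |s|) := by
    linarith [Real.add_one_le_exp (δ * |s|)]
  have h2 : Real.exp (δ * |s|) ≤ Real.exp (δ * s) + Real.exp (-δ * s) := by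
    rcases abs_cases s with ⟨h, _⟩ | ⟨h, _⟩ <;> rw [h]
    · linarith [Real.exp_pos (-δ * s)]
    · have : δ * -s = -δ * s := by ring
      rw [this]
      linarith [Real.exp_pos (δ * s)]
  have hexp := Real.exp_pos (c * s)
  rw [le_div_iff₀ hδ]
  have e1 : Real.exp ((c + δ) * s) = Real.exp (δ * s) * Real.exp (c * s) := by
    rw [← Real.exp_add]; ring_nf
  have e2 : Real.exp ((c - δ) * s) = Real.exp (-δ * s) * Real.exp (c * s) := by
    rw [← Real.exp_add]; ring_nf
  calc |s| * Real.exp (c * s) * δ = (δ * |s|) * Real.exp (c * s) := by ring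
    _ ≤ (Real.exp (δ * s) + Real.exp (-δ * s)) * Real.exp (c * s) :=
        mul_le_mul_of_nonneg_right (h1.trans h2) hexp.le
    _ = Real.exp ((c + δ) * s) + Real.exp ((c - δ) * s) := by rw [e1, e2]; ring

lemma toReal_withDensity_apply {X : Type*} [MeasurableSpace X] (μ : Measure X)
    {p : X → ℝ} (hp : Measurable p) (hp0 : ∀ x, 0 ≤ p x) (hpi : Integrable p μ)
    {s : Set X} (hs : MeasurableSet s) :
    ((μ.withDensity fun x => ENNReal.ofReal (p x)) s).toReal = ∫ x in s, p x ∂μ := by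
  rw [withDensity_apply _ hs,
    integral_eq_lintegral_of_nonneg_ae (Filter.Eventually.of_forall fun x => hp0 x)
      hp.aestronglyMeasurable]

lemma two_tvDist_eq {X : Type*} [MeasurableSpace X] (μ : Measure X) {p q : X → ℝ}
    (hpm : Measurable p) (hqm : Measurable q) (hp0 : ∀ x, 0 ≤ p x) (hq0 : ∀ x, 0 ≤ q x)
    (hpi : Integrable p μ) (hqi : Integrable q μ)
    (hpt : ∫ x, p x ∂μ = 1) (hqt : ∫ x, q x ∂μ = 1) :
    2 * tvDist (μ.withDensity fun x => ENNReal.ofReal (p x))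
        (μ.withDensity fun x => ENNReal.ofReal (q x)) = ∫ x, |p x - q x| ∂μ := by
  haveI : Nonempty {s : Set X // MeasurableSet s} := ⟨⟨∅, MeasurableSet.empty⟩⟩
  have hfi : Integrable (fun x => p x - q x) μ := hpi.sub hqi
  have hfabs : Integrable (fun x => |p x - q x|) μ := hfi.abs
  have key : ∀ s : Set X, MeasurableSet s →
      ∫ x in sᶜ, (p x - q x) ∂μ = - ∫ x in s, (p x - q x) ∂μ := by
    intro s hs
    have h1 := integral_add_compl hs hfi
    have h2 : ∫ x, (p x - q x) ∂μ = 0 := by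
      rw [integral_sub hpi hqi, hpt, hqt]; ring
    linarith
  have happ : ∀ s : {s : Set X // MeasurableSet s},
      |((μ.withDensity fun x => ENNReal.ofReal (p x)) s.1).toReal -
        ((μ.withDensity fun x => ENNReal.ofReal (q x)) s.1).toReal| =
      |∫ x in s.1, (p x - q x) ∂μ| := by
    intro s
    rw [toReal_withDensity_apply μ hpm hp0 hpi s.2, toReal_withDensity_apply μ hqm hq0 hqi s.2,
      ← integral_sub hpi.integrableOn hqi.integrableOn]
  have hbound : ∀ s : Set X, MeasurableSet s →
      |∫ x in s, (p x - q x) ∂μ| ≤ (∫ x, |p x - q x| ∂μ) / 2 := by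
    intro s hs
    have h1 : |∫ x in s, (p x - q x) ∂μ| ≤ ∫ x in s, |p x - q x| ∂μ := by
      simpa [Real.norm_eq_abs] using
        norm_integral_le_integral_norm (μ := μ.restrict s) (f := fun x => p x - q x)
    have h2 : |∫ x in sᶜ, (p x - q x) ∂μ| ≤ ∫ x in sᶜ, |p x - q x| ∂μ := by
      simpa [Real.norm_eq_abs] using
        norm_integral_le_integral_norm (μ := μ.restrict sᶜ) (f := fun x => p x - q x)
    have h3 := integral_add_compl hs hfabs
    have h4 := key s hs
    rw [h4, abs_neg] at h2
    linarith
  set S : Set X := {x | q x ≤ p x} with hSdef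
  have hSm : MeasurableSet S := measurableSet_le hqm hpm
  have hpos : ∫ x, |p x - q x| ∂μ = 2 * ∫ x in S, (p x - q x) ∂μ := by
    have e1 : ∫ x in S, |p x - q x| ∂μ = ∫ x in S, (p x - q x) ∂μ :=
      setIntegral_congr_fun hSm fun x hx => abs_of_nonneg (sub_nonneg.2 hx)
    have e2 : ∫ x in Sᶜ, |p x - q x| ∂μ = ∫ x in Sᶜ, -(p x - q x) ∂μ :=
      setIntegral_congr_fun hSm.compl fun x hx =>
        abs_of_nonpos (by
          have : ¬ q x ≤ p x := hx
          linarith [lt_of_not_ge this])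
    rw [integral_neg] at e2
    have h3 := integral_add_compl hSm hfabs
    have h4 := key S hSm
    linarith
  have hSpos : 0 ≤ ∫ x in S, (p x - q x) ∂μ := by
    have := integral_nonneg (μ := μ) (f := fun x => |p x - q x|) fun x => abs_nonneg _
    linarith
  have hle : tvDist (μ.withDensity fun x => ENNReal.ofReal (p x))
      (μ.withDensity fun x => ENNReal.ofReal (q x)) ≤ (∫ x, |p x - q x| ∂μ) / 2 :=
    ciSup_le fun s => by rw [happ s]; exact hbound s.1 s.2
  have hge : (∫ x, |p x - q x| ∂μ) / 2 ≤ tvDist (μ.withDensity fun x => ENNReal.ofReal (p x))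
      (μ.withDensity fun x => ENNReal.ofReal (q x)) := by
    have h5 : (∫ x, |p x - q x| ∂μ) / 2 = |∫ x in S, (p x - q x) ∂μ| := by
      rw [hpos, abs_of_nonneg hSpos]; ring
    have hbdd : BddAbove (Set.range fun s : {s : Set X // MeasurableSet s} =>
        |((μ.withDensity fun x => ENNReal.ofReal (p x)) s.1).toReal -
          ((μ.withDensity fun x => ENNReal.ofReal (q x)) s.1).toReal|) :=
      ⟨(∫ x, |p x - q x| ∂μ) / 2, by
        rintro r ⟨s, rfl⟩; exact (happ s).trans_le (hbound s.1 s.2)⟩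
    rw [h5, ← happ ⟨S, hSm⟩]
    exact le_ciSup hbdd ⟨S, hSm⟩
  linarith

/-- For a one-parameter exponential family, the `L¹`-information
`J_θ = E_θ[|T(X) - A'(θ)|]` (with `A'(θ₀) = E_{θ₀}[T(X)]`) satisfies
`2 ‖P_{θ₀+h} - P_{θ₀}‖_TV = |h| J_{θ₀} + o(|h|)` as `h → 0`. -/
theorem statement12 {X : Type*} [MeasurableSpace X]
    (μ : Measure X) (hμ : μ ≠ 0) (T : X → ℝ) (hT : Measurable T) (θ0 : ℝ)
    (hnbhd : ∃ ε > 0, ∀ θ : ℝ, |θ - θ0| < ε →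
      Integrable (fun x => Real.exp (θ * T x)) μ) :
    (fun h : ℝ =>
        2 * tvDist (expFam μ T (θ0 + h)) (expFam μ T θ0) -
          |h| * ∫ x, |T x - ∫ y, T y ∂(expFam μ T θ0)| ∂(expFam μ T θ0))
      =o[nhds 0] fun h : ℝ => h := by
  obtain ⟨ε, hε, hInt⟩ := hnbhd
  set p : ℝ → X → ℝ := fun θ x => Real.exp (θ * T x - logPart μ T θ) with hpdef
  set Z : ℝ → ℝ := fun θ => ∫ x, Real.exp (θ * T x) ∂μ with hZdef
  have hpmeas : ∀ θ, Measurable (p θ) := fun θ => ((hT.const_mul θ).sub_const _).exp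
  have hppos : ∀ θ x, 0 < p θ x := fun θ x => Real.exp_pos _
  have hZpos : ∀ θ, |θ - θ0| < ε → 0 < Z θ := by
    intro θ hθ
    rw [hZdef]
    rw [integral_pos_iff_support_of_nonneg (fun x => (Real.exp_pos _).le) (hInt θ hθ)]
    have hsupp : Function.support (fun x => Real.exp (θ * T x)) = Set.univ :=
      Set.eq_univ_of_forall fun x => (Real.exp_pos _).ne'
    rw [hsupp]
    exact Measure.measure_univ_pos.mpr hμ
  have hexpA : ∀ θ, |θ - θ0| < ε → Real.exp (-(logPart μ T θ)) = (Z θ)⁻¹ := by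
    intro θ hθ
    rw [Real.exp_neg, show logPart μ T θ = Real.log (Z θ) from rfl,
      Real.exp_log (hZpos θ hθ)]
  have hpsplit : ∀ θ, p θ = fun x => Real.exp (-(logPart μ T θ)) * Real.exp (θ * T x) := by
    intro θ; funext x; rw [hpdef]; simp only []
    rw [← Real.exp_add]; congr 1; ring
  have hpint : ∀ θ, |θ - θ0| < ε → Integrable (p θ) μ := by
    intro θ hθ; rw [hpsplit θ]; exact (hInt θ hθ).const_mul _
  have htotal : ∀ θ, |θ - θ0| < ε → ∫ x, p θ x ∂μ = 1 := by
    intro θ hθ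
    simp only [hpsplit θ]
    rw [integral_const_mul, hexpA θ hθ, inv_mul_cancel₀ (hZpos θ hθ).ne']
  set G0 : X → ℝ := fun x => Real.exp ((θ0 - 3*ε/4) * T x) + Real.exp ((θ0 + 3*ε/4) * T x)
    with hG0def
  have hG0i : Integrable G0 μ := by
    apply Integrable.add
    · apply hInt
      rw [show θ0 - 3*ε/4 - θ0 = -(3*ε/4) by ring, abs_neg, abs_of_nonneg (by positivity)]
      linarith
    · apply hInt
      rw [show θ0 + 3*ε/4 - θ0 = 3*ε/4 by ring, abs_of_nonneg (by positivity)]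
      linarith
  have hG0nonneg : ∀ x, 0 ≤ G0 x := fun x => by positivity
  have hbound0 : ∀ θ, |θ - θ0| ≤ ε/2 → ∀ x, Real.exp (θ * T x) ≤ G0 x := by
    intro θ hθ x
    obtain ⟨h1, h2⟩ := abs_le.mp hθ
    exact exp_mul_le_add (T x) (by linarith) (by linarith)
  have hbound1 : ∀ θ, |θ - θ0| ≤ ε/2 → ∀ x, |T x| * Real.exp (θ * T x) ≤ (8/ε) * G0 x := by
    intro θ hθ x
    obtain ⟨h1, h2⟩ := abs_le.mp hθ
    have hq := abs_mul_exp_le θ (T x) (show (0:ℝ) < ε/4 by linarith)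
    have e1 : Real.exp ((θ + ε/4) * T x) ≤ G0 x :=
      exp_mul_le_add (T x) (by linarith) (by linarith)
    have e2 : Real.exp ((θ - ε/4) * T x) ≤ G0 x :=
      exp_mul_le_add (T x) (by linarith) (by linarith)
    calc |T x| * Real.exp (θ * T x)
        ≤ (Real.exp ((θ + ε/4) * T x) + Real.exp ((θ - ε/4) * T x)) / (ε/4) := hq
      _ ≤ (G0 x + G0 x) / (ε/4) := by gcongr
      _ = (8/ε) * G0 x := by field_simp; ring
  have hZderiv : ∀ θ, |θ - θ0| < ε/4 →
      Integrable (fun x => T x * Real.exp (θ * T x)) μ ∧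
      HasDerivAt Z (∫ x, T x * Real.exp (θ * T x) ∂μ) θ := by
    intro θ hθ
    apply hasDerivAt_integral_of_dominated_loc_of_deriv_le
      (F' := fun θ x => T x * Real.exp (θ * T x)) (bound := fun x => (8/ε) * G0 x)
      (Metric.ball_mem_nhds θ (show (0:ℝ) < ε/4 by linarith))
    · exact Eventually.of_forall fun θ' => ((hT.const_mul θ').exp).aestronglyMeasurable
    · exact hInt θ (by linarith)
    · exact (hT.mul ((hT.const_mul θ).exp)).aestronglyMeasurable
    · refine Eventually.of_forall fun x θ' hθ' => ?_
      have hdist := Metric.mem_ball.mp hθ'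
      rw [Real.dist_eq] at hdist
      have hd : |θ' - θ0| ≤ ε/2 := by
        calc |θ' - θ0| = |(θ' - θ) + (θ - θ0)| := by ring_nf
          _ ≤ |θ' - θ| + |θ - θ0| := abs_add_le _ _
          _ ≤ ε/2 := by linarith
      rw [Real.norm_eq_abs, abs_mul, abs_of_pos (Real.exp_pos _)]
      exact hbound1 θ' hd x
    · exact hG0i.const_mul _
    · refine Eventually.of_forall fun x θ' hθ' => ?_
      have hder := (hasDerivAt_mul_const (T x) (x := θ')).exp
      rw [mul_comm (T x)]
      exact hder
  set Z' : ℝ → ℝ := fun θ => ∫ x, T x * Real.exp (θ * T x) ∂μ with hZ'def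
  have hAderiv : ∀ θ, |θ - θ0| < ε/4 → HasDerivAt (logPart μ T) (Z' θ / Z θ) θ := by
    intro θ hθ
    exact (hZderiv θ hθ).2.log (hZpos θ (by linarith)).ne'
  have hpderiv : ∀ θ, |θ - θ0| < ε/4 → ∀ x,
      HasDerivAt (fun θ' => p θ' x) (p θ x * (T x - Z' θ / Z θ)) θ := by
    intro θ hθ x
    have h1 : HasDerivAt (fun θ' => θ' * T x - logPart μ T θ') (T x - Z' θ / Z θ) θ :=
      (hasDerivAt_mul_const (T x)).sub (hAderiv θ hθ)
    exact h1.exp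
  have hW : ∀ θ ∈ Icc (θ0 - ε/8) (θ0 + ε/8), |θ - θ0| < ε/4 := by
    intro θ hθ
    rw [abs_lt]
    constructor
    · linarith [hθ.1]
    · linarith [hθ.2]
  have hIne : (θ0 : ℝ) ∈ Icc (θ0 - ε/8) (θ0 + ε/8) := by
    constructor <;> linarith
  have hZcont : ContinuousOn Z (Icc (θ0 - ε/8) (θ0 + ε/8)) := fun θ hθ =>
    ((hZderiv θ (hW θ hθ)).2.continuousAt).continuousWithinAt
  obtain ⟨θm, hθm, hmin'⟩ := isCompact_Icc.exists_isMinOn ⟨θ0, hIne⟩ hZcont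
  have hmin : ∀ θ ∈ Icc (θ0 - ε/8) (θ0 + ε/8), Z θm ≤ Z θ := fun θ hθ => hmin' hθ
  set Zm := Z θm with hZm
  have hZmpos : 0 < Zm := hZpos θm (lt_trans (hW θm hθm) (by linarith))
  set B := ∫ x, (8/ε) * G0 x ∂μ with hB
  have hZ'le : ∀ θ ∈ Icc (θ0 - ε/8) (θ0 + ε/8), |Z' θ| ≤ B := by
    intro θ hθ
    have h1 : |Z' θ| ≤ ∫ x, |T x| * Real.exp (θ * T x) ∂μ := by
      simpa [Real.norm_eq_abs, abs_mul, abs_of_pos (Real.exp_pos _)] using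
        norm_integral_le_integral_norm (μ := μ) (f := fun x => T x * Real.exp (θ * T x))
    have hint2 : Integrable (fun x => |T x| * Real.exp (θ * T x)) μ :=
      (hZderiv θ (hW θ hθ)).1.abs.congr (Filter.Eventually.of_forall fun x => by
        simp [abs_mul, abs_of_pos (Real.exp_pos _)])
    exact h1.trans (integral_mono hint2 (hG0i.const_mul _) fun x =>
      hbound1 θ ((hW θ hθ).le.trans (by linarith)) x)
  set M := B / Zm with hM
  have hA'le : ∀ θ ∈ Icc (θ0 - ε/8) (θ0 + ε/8), |Z' θ / Z θ| ≤ M := by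
    intro θ hθ
    rw [abs_div, abs_of_pos (hZpos θ (lt_trans (hW θ hθ) (by linarith)))]
    exact div_le_div₀ (le_trans (abs_nonneg _) (hZ'le θ hθ)) (hZ'le θ hθ) hZmpos (hmin θ hθ)
  have hMnn : 0 ≤ M := le_trans (abs_nonneg _) (hA'le θ0 hIne)
  set C := (8/ε + M) / Zm with hC
  have hpbound : ∀ θ ∈ Icc (θ0 - ε/8) (θ0 + ε/8), ∀ x,
      |p θ x * (T x - Z' θ / Z θ)| ≤ C * G0 x := by
    intro θ hθ x
    have hθε : |θ - θ0| ≤ ε/2 := (hW θ hθ).le.trans (by linarith)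
    have hθε' : |θ - θ0| < ε := lt_trans (hW θ hθ) (by linarith)
    have hZθ := hZpos θ hθε'
    have e0 : p θ x = (Z θ)⁻¹ * Real.exp (θ * T x) := by
      have := congrFun (hpsplit θ) x
      rw [this, hexpA θ hθε']
    have h1 : |T x - Z' θ / Z θ| ≤ |T x| + M := by
      have habs : |T x - Z' θ / Z θ| ≤ |T x| + |Z' θ / Z θ| := by
        rw [sub_eq_add_neg]
        exact (abs_add_le _ _).trans_eq (by rw [abs_neg])
      linarith [hA'le θ hθ]
    rw [abs_mul, abs_of_pos (hppos θ x), e0]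
    calc (Z θ)⁻¹ * Real.exp (θ * T x) * |T x - Z' θ / Z θ|
        ≤ (Z θ)⁻¹ * Real.exp (θ * T x) * (|T x| + M) := by
          apply mul_le_mul_of_nonneg_left h1 (by positivity)
      _ = (Z θ)⁻¹ * (|T x| * Real.exp (θ * T x) + M * Real.exp (θ * T x)) := by ring
      _ ≤ (Z θ)⁻¹ * ((8/ε) * G0 x + M * G0 x) := by
          apply mul_le_mul_of_nonneg_left _ (inv_nonneg.mpr hZθ.le)
          have hb1 := hbound1 θ hθε x
          have hb0 := hbound0 θ hθε x
          have hb2 : M * Real.exp (θ * T x) ≤ M * G0 x := mul_le_mul_of_nonneg_left hb0 hMnn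
          exact add_le_add hb1 hb2
      _ ≤ Zm⁻¹ * ((8/ε) * G0 x + M * G0 x) := by
          apply mul_le_mul_of_nonneg_right _
            (add_nonneg (mul_nonneg (by positivity) (hG0nonneg x))
              (mul_nonneg hMnn (hG0nonneg x)))
          exact inv_anti₀ hZmpos (hmin θ hθ)
      _ = C * G0 x := by rw [hC, div_eq_mul_inv]; ring
  have hMVT : ∀ h : ℝ, |h| ≤ ε/8 → ∀ x,
      |p (θ0 + h) x - p θ0 x| ≤ C * G0 x * |h| := by
    intro h hh x
    have hmem : θ0 + h ∈ Icc (θ0 - ε/8) (θ0 + ε/8) := by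
      obtain ⟨h1, h2⟩ := abs_le.mp hh
      constructor <;> linarith
    have key := Convex.norm_image_sub_le_of_norm_hasDerivWithin_le
      (f := fun θ => p θ x) (f' := fun θ => p θ x * (T x - Z' θ / Z θ))
      (s := Icc (θ0 - ε/8) (θ0 + ε/8)) (C := C * G0 x)
      (fun θ hθ => (hpderiv θ (hW θ hθ) x).hasDerivWithinAt)
      (fun θ hθ => by rw [Real.norm_eq_abs]; exact hpbound θ hθ x)
      (convex_Icc _ _) hIne hmem
    simpa [Real.norm_eq_abs, add_sub_cancel_left] using key
  set m := Z' θ0 / Z θ0 with hm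
  have hθ00 : |θ0 - θ0| < ε/4 := by rw [sub_self, abs_zero]; linarith
  have hshift : Tendsto (fun h : ℝ => θ0 + h) (nhdsWithin 0 {(0:ℝ)}ᶜ)
      (nhdsWithin θ0 {θ0}ᶜ) := by
    rw [tendsto_nhdsWithin_iff]
    constructor
    · have h1 : Tendsto (fun h : ℝ => θ0 + h) (nhds 0) (nhds (θ0 + 0)) :=
        (continuous_const.add continuous_id).tendsto 0
      simpa using h1.mono_left nhdsWithin_le_nhds
    · filter_upwards [eventually_mem_nhdsWithin] with h hh
      simp only [mem_compl_iff, mem_singleton_iff] at hh ⊢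
      intro hcon
      exact hh (by linarith)
  have hq_tendsto : ∀ x, Tendsto (fun h : ℝ => |(p (θ0 + h) x - p θ0 x) / h|)
      (nhdsWithin 0 {(0:ℝ)}ᶜ) (nhds |p θ0 x * (T x - m)|) := by
    intro x
    have hd := hpderiv θ0 hθ00 x
    rw [hasDerivAt_iff_tendsto_slope] at hd
    have h2 := hd.comp hshift
    have h3 : Tendsto (fun h : ℝ => (p (θ0 + h) x - p θ0 x) / h)
        (nhdsWithin 0 {(0:ℝ)}ᶜ) (nhds (p θ0 x * (T x - m))) := by
      apply Tendsto.congr' _ h2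
      filter_upwards [eventually_mem_nhdsWithin] with h hh
      simp only [Function.comp_apply]
      rw [slope_def_field]
      congr 1
      ring
    exact (continuous_abs.tendsto _).comp h3
  have hsmall : ∀ᶠ h : ℝ in nhdsWithin 0 {(0:ℝ)}ᶜ, |h| ≤ ε/8 := by
    apply Eventually.filter_mono nhdsWithin_le_nhds
    have hb := Metric.ball_mem_nhds (0:ℝ) (show (0:ℝ) < ε/8 by linarith)
    filter_upwards [hb] with h hh
    rw [Metric.mem_ball, Real.dist_eq, sub_zero] at hh
    exact hh.le
  have hne : ∀ᶠ h : ℝ in nhdsWithin 0 {(0:ℝ)}ᶜ, h ≠ 0 := by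
    filter_upwards [eventually_mem_nhdsWithin] with h hh
    exact hh
  have hDCT : Tendsto (fun h : ℝ => ∫ x, |(p (θ0 + h) x - p θ0 x) / h| ∂μ)
      (nhdsWithin 0 {(0:ℝ)}ᶜ) (nhds (∫ x, |p θ0 x * (T x - m)| ∂μ)) := by
    apply tendsto_integral_filter_of_dominated_convergence (bound := fun x => C * G0 x)
    · exact Eventually.of_forall fun h =>
        (((hpmeas _).sub (hpmeas θ0)).div_const h).abs.aestronglyMeasurable
    · filter_upwards [hsmall, hne] with h hh hh0
      refine Eventually.of_forall fun x => ?_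
      rw [Real.norm_eq_abs, abs_abs, abs_div, div_le_iff₀ (abs_pos.mpr hh0)]
      exact hMVT h hh x
    · exact hG0i.const_mul _
    · exact Eventually.of_forall hq_tendsto
  have hPapp : ∀ g : X → ℝ, ∫ y, g y ∂(expFam μ T θ0) = ∫ y, p θ0 y * g y ∂μ := by
    intro g
    rw [show expFam μ T θ0
        = μ.withDensity fun x => ((Real.toNNReal (p θ0 x) : NNReal) : ENNReal) from rfl]
    rw [integral_withDensity_eq_integral_smul (hpmeas θ0).real_toNNReal g]
    congr 1
    funext y
    rw [NNReal.smul_def, Real.coe_toNNReal _ (hppos θ0 y).le, smul_eq_mul]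
  have hε0 : |θ0 - θ0| < ε := by rw [sub_self, abs_zero]; exact hε
  have hmint : ∫ y, T y ∂(expFam μ T θ0) = m := by
    rw [hPapp T]
    have e : ∀ y, p θ0 y * T y
        = Real.exp (-(logPart μ T θ0)) * (T y * Real.exp (θ0 * T y)) := by
      intro y
      rw [congrFun (hpsplit θ0) y]
      ring
    simp only [e]
    rw [integral_const_mul, hexpA θ0 hε0, hm, div_eq_inv_mul]
  have hJeq : ∫ x, |T x - ∫ y, T y ∂(expFam μ T θ0)| ∂(expFam μ T θ0)
      = ∫ x, |p θ0 x * (T x - m)| ∂μ := by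
    rw [hmint, hPapp (fun x => |T x - m|)]
    congr 1
    funext x
    rw [abs_mul, abs_of_pos (hppos θ0 x)]
  have hTV : ∀ h : ℝ, |h| ≤ ε/8 →
      2 * tvDist (expFam μ T (θ0 + h)) (expFam μ T θ0)
        = ∫ x, |p (θ0 + h) x - p θ0 x| ∂μ := by
    intro h hh
    have h1 : |(θ0 + h) - θ0| < ε := by
      rw [show θ0 + h - θ0 = h by ring]; linarith [hh]
    exact two_tvDist_eq μ (hpmeas _) (hpmeas _) (fun x => (hppos _ x).le)
      (fun x => (hppos _ x).le) (hpint _ h1) (hpint _ hε0) (htotal _ h1) (htotal _ hε0)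
  rw [isLittleO_iff]
  intro c hc
  rw [← nhdsNE_sup_pure (0:ℝ), eventually_sup, eventually_pure]
  constructor
  · have hd := Metric.tendsto_nhds.mp hDCT c hc
    filter_upwards [hd, hsmall, hne] with h hdist hsm hne0
    rw [hTV h hsm, hJeq]
    have hsplit2 : ∫ x, |p (θ0 + h) x - p θ0 x| ∂μ
        = |h| * ∫ x, |(p (θ0 + h) x - p θ0 x) / h| ∂μ := by
      rw [← integral_const_mul]
      congr 1
      funext x
      rw [abs_div]
      field_simp
    rw [hsplit2, ← mul_sub, Real.norm_eq_abs, Real.norm_eq_abs, abs_mul, abs_abs]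
    rw [Real.dist_eq] at hdist
    calc |h| * |∫ x, |(p (θ0+h) x - p θ0 x)/h| ∂μ - ∫ x, |p θ0 x * (T x - m)| ∂μ|
        ≤ |h| * c := mul_le_mul_of_nonneg_left hdist.le (abs_nonneg h)
      _ = c * |h| := mul_comm _ _
  · haveI : Nonempty {s : Set X // MeasurableSet s} := ⟨⟨∅, MeasurableSet.empty⟩⟩
    have h0 : tvDist (expFam μ T θ0) (expFam μ T θ0) = 0 := by
      unfold tvDist
      simp [ciSup_const]
    simp [h0]
end
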